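/- Let f be a continuous piecewise-monotone interval map with a unique fixed point a, and let ᾱ = (I₀, I₁, …, I_{k−1}) be an admissible loop of non-degenerate intervals with over-rotation pair (p/2, k). Suppose it is NOT the case that k is even and for every j the intervals I_j and I_{j+1 (mod k)} lie on opposite sides of a. Then there exists a periodic point x ∈ I₀ with x ≠ a such that f^j(x) ∈ I_j for 0 ≤ j ≤ k−1, f^k(x) = x, and the over-rotation number of the orbit of x equals p/(2k). If moreover the sequence (φ_a(I₀), φ_a(I₁), …, φ_a(I_{k−1})) is non-repetitive, then the over-rotation pair of the orbit of x is (p/2, k). -/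

import Mathlib

open Set Function
open scoped Classical

namespace OverRotation

/-- Symbols for itineraries of unimodal maps, ordered `L < C < R` via `Symb.val`. -/
inductive Symb : Type
  | L : Symb
  | C : Symb
  | R : Symb
  deriving DecidableEq

def Symb.val : Symb → ℕ
  | Symb.L => 0
  | Symb.C => 1
  | Symb.R => 2

/-- `GtA a x y` means `x >_a y`, i.e. `x < y < a` or `a < y < x`. -/
def GtA (a x y : ℝ) : Prop := (x < y ∧ y < a) ∨ (a < y ∧ y < x)

/-- `φ_a(y) = 1` if `y > a`, and `0` otherwise. -/
noncomputable def phiA (a y : ℝ) : ℝ := if a < y then 1 else 0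

/-- The (forward) orbit of `x` under `f`. -/
def orbitSet (f : ℝ → ℝ) (x : ℝ) : Set ℝ := Set.range fun k : ℕ => f^[k] x

/-- The number of indices `0 ≤ i < q` at which consecutive displacements along the
orbit of `x` have different signs; for a cycle of over-rotation pair `(p,q)` this is `2p`. -/
noncomputable def switchCount (f : ℝ → ℝ) (x : ℝ) (q : ℕ) : ℕ :=
  Set.ncard {i : ℕ | i < q ∧ (f^[i+1] x - f^[i] x) * (f^[i+2] x - f^[i+1] x) < 0}

/-- `x` generates a cycle of `f`, lying in `I`, of over-rotation pair `(p, q)`. -/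
def IsCycleIn (f : ℝ → ℝ) (I : Set ℝ) (x : ℝ) (p q : ℕ) : Prop :=
  x ∈ I ∧ 2 ≤ q ∧ Function.minimalPeriod f x = q ∧ switchCount f x q = 2 * p

/-- The set of over-rotation numbers of cycles of `f` lying in `I`. -/
def orNumsIn (f : ℝ → ℝ) (I : Set ℝ) : Set ℝ :=
  {ρ : ℝ | ∃ x p q, IsCycleIn f I x p q ∧ ρ = (p : ℝ) / (q : ℝ)}

/-- `L` is the code of the cycle `P` (with over-rotation number `ρ`, fixed point `a`):
`L` vanishes at the leftmost point of `P` and `L(f y) = L y + ρ - φ_a y` on `P`. -/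
def IsCode (f : ℝ → ℝ) (a : ℝ) (P : Set ℝ) (ρ : ℝ) (L : ℝ → ℝ) : Prop :=
  (∃ x₀ ∈ P, (∀ y ∈ P, x₀ ≤ y) ∧ L x₀ = 0) ∧
    ∀ y ∈ P, L (f y) = L y + ρ - phiA a y

/-- A pattern: a cyclic permutation of `{0, …, n-1}`, `n ≥ 2`. -/
def IsPattern {n : ℕ} (π : Equiv.Perm (Fin n)) : Prop :=
  2 ≤ n ∧ π.IsCycle ∧ ∀ i, π i ≠ i

/-- `f` exhibits the pattern `π` on the cycle `x 0 < x 1 < … < x (n-1)` inside `I`. -/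
def ExhibitsOn (f : ℝ → ℝ) (I : Set ℝ) {n : ℕ} (π : Equiv.Perm (Fin n)) (x : Fin n → ℝ) : Prop :=
  (∀ i, x i ∈ I) ∧ StrictMono x ∧ ∀ i, f (x i) = x (π i)

/-- `f` exhibits the pattern `π` on some cycle inside `I`. -/
def Exhibits (f : ℝ → ℝ) (I : Set ℝ) {n : ℕ} (π : Equiv.Perm (Fin n)) : Prop :=
  ∃ x : Fin n → ℝ, ExhibitsOn f I π x

/-- Pattern `π` forces pattern `θ`: every continuous self-map of a compact interval
having a cycle exhibiting `π` has a cycle exhibiting `θ`. -/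
def Forces {m n : ℕ} (π : Equiv.Perm (Fin m)) (θ : Equiv.Perm (Fin n)) : Prop :=
  ∀ (f : ℝ → ℝ) (lo hi : ℝ), lo ≤ hi → ContinuousOn f (Set.Icc lo hi) →
    Set.MapsTo f (Set.Icc lo hi) (Set.Icc lo hi) →
    Exhibits f (Set.Icc lo hi) π → Exhibits f (Set.Icc lo hi) θ

/-- Twice the `p` of the over-rotation pair of the pattern `π`: the number of (spatial)
positions at which the displacement direction changes at the next step. -/
noncomputable def permSwitchTwice {n : ℕ} (π : Equiv.Perm (Fin n)) : ℕ :=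
  Set.ncard {i : Fin n | (i < π i ∧ π (π i) < π i) ∨ (π i < i ∧ π i < π (π i))}

/-- Over-rotation number of a pattern. -/
noncomputable def rotNum {n : ℕ} (π : Equiv.Perm (Fin n)) : ℝ :=
  (permSwitchTwice π : ℝ) / (2 * (n : ℝ))

/-- An over-twist pattern: a pattern forcing no other pattern of the same
over-rotation number. -/
def IsOverTwist {n : ℕ} (π : Equiv.Perm (Fin n)) : Prop :=
  IsPattern π ∧ ∀ (m : ℕ) (θ : Equiv.Perm (Fin m)), IsPattern θ →
    rotNum θ = rotNum π → Forces π θ → ∃ h : m = n, h ▸ θ = π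

/-- `f` is the `P`-linear map of the cycle `x 0 < … < x (n-1)` exhibiting `π`:
it agrees with the pattern on the cycle and is affine on each complementary interval
(and hence continuous on the convex hull of the cycle). -/
def IsPLinear {n : ℕ} (x : Fin n → ℝ) (π : Equiv.Perm (Fin n)) (f : ℝ → ℝ) : Prop :=
  (∀ i, f (x i) = x (π i)) ∧
  (∀ i j : Fin n, (i : ℕ) + 1 = (j : ℕ) → ∀ t : ℝ, t ∈ Set.Icc (0:ℝ) 1 →
    f ((1 - t) * x i + t * x j) = (1 - t) * x (π i) + t * x (π j)) ∧
  (∀ i j : Fin n, ContinuousOn f (Set.Icc (x i) (x j)))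

/-- A unimodal map of `[0,1]` with critical point `c`: continuous, strictly increasing
on `[0,c]`, strictly decreasing on `[c,1]`, with a unique fixed point. -/
def UnimodalMap (f : ℝ → ℝ) (c : ℝ) : Prop :=
  ContinuousOn f (Set.Icc 0 1) ∧ Set.MapsTo f (Set.Icc 0 1) (Set.Icc 0 1) ∧
  c ∈ Set.Icc (0:ℝ) 1 ∧ StrictMonoOn f (Set.Icc 0 c) ∧ StrictAntiOn f (Set.Icc c 1) ∧
  ∃! a, a ∈ Set.Icc (0:ℝ) 1 ∧ f a = a

/-- A unimodal pattern: increasing up to some index, decreasing afterwards. -/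
def UnimodalPattern {n : ℕ} (π : Equiv.Perm (Fin n)) : Prop :=
  ∃ m : Fin n, (∀ i j : Fin n, i < j → j ≤ m → π i < π j) ∧
    (∀ i j : Fin n, m ≤ i → i < j → π j < π i)

/-- The itinerary of `x` with respect to critical point `c`. -/
noncomputable def itin (f : ℝ → ℝ) (c x : ℝ) (j : ℕ) : Symb :=
  if f^[j] x < c then Symb.L else if f^[j] x = c then Symb.C else Symb.R

/-- The kneading sequence of a unimodal map `f` with critical point `c`. -/
noncomputable def kneading (f : ℝ → ℝ) (c : ℝ) : ℕ → Symb := itin f c (f c)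

/-- The number of `R`'s among `A 0, …, A (j-1)` is even. -/
def RParityEven (A : ℕ → Symb) (j : ℕ) : Prop :=
  Even (Set.ncard {i : ℕ | i < j ∧ A i = Symb.R})

/-- The strict kneading (parity-lexicographic) order `A ≻ B` on symbol sequences. -/
def KOgt (A B : ℕ → Symb) : Prop :=
  ∃ j : ℕ, (∀ i < j, A i = B i) ∧
    ((RParityEven A j ∧ (B j).val < (A j).val) ∨ (¬ RParityEven A j ∧ (A j).val < (B j).val))

/-- `A ⪰ B` in the kneading order. -/
def KOge (A B : ℕ → Symb) : Prop := A = B ∨ KOgt A B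

/-- The kneading sequence `ν_{p/q}` of the unimodal over-twist pattern of
over-rotation number `p/q`. -/
def nuRho (p q : ℕ) (n : ℕ) : Symb :=
  if ((n+1) * p) % q = 0 then Symb.C
  else if ((n+1) * p) % q < 2 * p then Symb.R
  else Symb.L

/-- The strongest kneading sequence `ν'_{p/q}` associated with the over-rotation
interval `[p/q, 1/2]`. -/
def nuRho' (p q : ℕ) (n : ℕ) : Symb :=
  let k := if n < q + 2 then n else ((n - 2) % q) + 2
  if k = q - 1 then Symb.L
  else if k = q then Symb.R
  else if k = q + 1 then Symb.R
  else nuRho p q k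

/-- The permutation `π_{p/q}` (0-based): `i ↦ i + p` for `i ≤ q-2p-1`,
`i ↦ 2q-2p-1-i` for `q-2p ≤ i ≤ q-p-1`, and `i ↦ q-1-i` for `i ≥ q-p`. -/
def twistFun (p q i : ℕ) : ℕ :=
  if i + 2 * p < q then i + p
  else if i + p < q then 2 * q - 2 * p - 1 - i
  else q - 1 - i

/-- Strict Sharkovsky ordering `m ≻ₛ n` ("`m` is sharper than `n`"). -/
def SharkGt (m n : ℕ) : Prop :=
  if m / 2 ^ (m.factorization 2) = 1 then n / 2 ^ (n.factorization 2) = 1 ∧ n < m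
  else n / 2 ^ (n.factorization 2) = 1 ∨ m.factorization 2 < n.factorization 2 ∨
    (m.factorization 2 = n.factorization 2 ∧
      m / 2 ^ (m.factorization 2) < n / 2 ^ (n.factorization 2))

/-- Non-strict Sharkovsky ordering, so that `Sh(k) = {n | 0 < n ∧ SharkGe k n}`. -/
def SharkGe (m n : ℕ) : Prop := m = n ∨ SharkGt m n

/-- `f` is piecewise (strictly) monotone on `[lo, hi]`. -/
def PiecewiseMonotoneOn (f : ℝ → ℝ) (lo hi : ℝ) : Prop :=
  ∃ (k : ℕ) (t : ℕ → ℝ), 0 < k ∧ t 0 = lo ∧ t k = hi ∧ (∀ i < k, t i < t (i+1)) ∧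
    ∀ i < k, StrictMonoOn f (Set.Icc (t i) (t (i+1))) ∨ StrictAntiOn f (Set.Icc (t i) (t (i+1)))

/-- The cycle `y 0 < … < y (N-1)` of `g` has a block structure over the pattern `θ`
on `m` blocks of `N/m` consecutive points each. -/
def HasBlockStructure (g : ℝ → ℝ) {N m : ℕ} (y : Fin N → ℝ) (θ : Equiv.Perm (Fin m)) : Prop :=
  m ∣ N ∧ 1 < m ∧ m < N ∧
  ∀ i : Fin N, ∃ (j : Fin N) (b b' : Fin m),
    g (y i) = y j ∧ (b : ℕ) = (i : ℕ) / (N / m) ∧ (b' : ℕ) = (j : ℕ) / (N / m) ∧ θ b = b'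

/-- `LF(p/q)`: the largest rational `l/k` with `l, k` positive, `k < q` and `l/k < p/q`. -/
noncomputable def LFrac (p q : ℕ) : ℝ :=
  sSup {r : ℝ | ∃ l k : ℕ, 0 < l ∧ 0 < k ∧ k < q ∧ (l:ℝ)/(k:ℝ) < (p:ℝ)/(q:ℝ) ∧ r = (l:ℝ)/(k:ℝ)}

end OverRotation

namespace OverRotation


section Basic
variable {f : ℝ → ℝ} {lo hi a : ℝ}

lemma fix_gt (hcont : ContinuousOn f (Set.Icc lo hi))
    (hmaps : Set.MapsTo f (Set.Icc lo hi) (Set.Icc lo hi))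
    (ha : a ∈ Set.Icc lo hi)
    (hauniq : ∀ b ∈ Set.Icc lo hi, f b = b → b = a)
    {y : ℝ} (hy : y ∈ Set.Icc lo hi) (hya : y < a) : y < f y := by
  by_contra hcon
  push_neg at hcon
  rcases eq_or_lt_of_le hcon with heq | hlt
  · exact absurd (hauniq y hy heq.symm.symm) (ne_of_lt hya)
  · -- f y < y ; consider g = f - id on [lo, y]
    have hsub : Set.Icc lo y ⊆ Set.Icc lo hi := Set.Icc_subset_Icc le_rfl hy.2
    have hcg : ContinuousOn (fun z => f z - z) (Set.Icc lo y) :=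
      (hcont.mono hsub).sub (continuousOn_id)
    have hlo : lo ≤ y := hy.1
    have h1 : f lo - lo ≥ 0 := by
      have := (hmaps (Set.left_mem_Icc.mpr (le_trans hy.1 hy.2))).1
      linarith
    have h2 : f y - y < 0 := by linarith
    have : (0:ℝ) ∈ Set.Icc (f y - y) (f lo - lo) := ⟨le_of_lt h2, h1⟩
    have := intermediate_value_Icc' hlo hcg this
    obtain ⟨b, hb, hb0⟩ := this
    have hbfix : f b = b := by dsimp at hb0; linarith
    have := hauniq b (hsub hb) hbfix
    have : b < a := lt_of_le_of_lt hb.2 hya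
    simp_all

lemma fix_lt (hcont : ContinuousOn f (Set.Icc lo hi))
    (hmaps : Set.MapsTo f (Set.Icc lo hi) (Set.Icc lo hi))
    (ha : a ∈ Set.Icc lo hi)
    (hauniq : ∀ b ∈ Set.Icc lo hi, f b = b → b = a)
    {y : ℝ} (hy : y ∈ Set.Icc lo hi) (hya : a < y) : f y < y := by
  by_contra hcon
  push_neg at hcon
  rcases eq_or_lt_of_le hcon with heq | hlt
  · exact absurd (hauniq y hy heq.symm) (ne_of_gt hya)
  · have hsub : Set.Icc y hi ⊆ Set.Icc lo hi := Set.Icc_subset_Icc hy.1 le_rfl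
    have hcg : ContinuousOn (fun z => f z - z) (Set.Icc y hi) :=
      (hcont.mono hsub).sub (continuousOn_id)
    have hhi : y ≤ hi := hy.2
    have h1 : f hi - hi ≤ 0 := by
      have := (hmaps (Set.right_mem_Icc.mpr (le_trans hy.1 hy.2))).2
      linarith
    have h2 : f y - y > 0 := by linarith
    have : (0:ℝ) ∈ Set.Icc (f hi - hi) (f y - y) := ⟨h1, le_of_lt h2⟩
    have := intermediate_value_Icc' hhi hcg this
    obtain ⟨b, hb, hb0⟩ := this
    have hbfix : f b = b := by dsimp at hb0; linarith
    have := hauniq b (hsub hb) hbfix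
    have : a < b := lt_of_lt_of_le hya hb.1
    simp_all

lemma iter_maps (hmaps : Set.MapsTo f (Set.Icc lo hi) (Set.Icc lo hi)) :
    ∀ n, Set.MapsTo f^[n] (Set.Icc lo hi) (Set.Icc lo hi) := by
  intro n
  induction n with
  | zero => simp [Set.MapsTo]
  | succ n ih =>
    intro y hy
    rw [Function.iterate_succ_apply']
    exact hmaps (ih hy)

lemma iter_cont (hcont : ContinuousOn f (Set.Icc lo hi))
    (hmaps : Set.MapsTo f (Set.Icc lo hi) (Set.Icc lo hi)) :
    ∀ n, ContinuousOn f^[n] (Set.Icc lo hi) := by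
  intro n
  induction n with
  | zero => simpa using continuousOn_id
  | succ n ih =>
    rw [Function.iterate_succ']
    exact hcont.comp ih (iter_maps hmaps n)

lemma side_det {a z w : ℝ} (hz : z ∈ Set.uIcc a w) (hza : z ≠ a) (hwa : w ≠ a) :
    (a < z ↔ a < w) := by
  rcases hwa.lt_or_gt with hw | hw
  · rw [Set.uIcc_of_ge (le_of_lt hw)] at hz
    constructor
    · intro h; exact absurd (lt_of_lt_of_le h hz.2) (lt_irrefl a)
    · intro h; exact absurd h (not_lt.mpr (le_of_lt hw))
  · rw [Set.uIcc_of_le (le_of_lt hw)] at hz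
    exact ⟨fun _ => hw, fun _ => lt_of_le_of_ne hz.1 (Ne.symm hza)⟩

end Basic

lemma cover_aux {g : ℝ → ℝ} {s t c d : ℝ} (hst : s ≤ t)
    (hg : ContinuousOn g (Set.Icc s t)) (hgs : g s = c) (hgt : g t = d)
    (hcd : c ≤ d) :
    ∃ s' t', s' ≤ t' ∧ Set.Icc s' t' ⊆ Set.Icc s t ∧ g '' Set.Icc s' t' = Set.Icc c d := by
  set T₁ : Set ℝ := Set.Icc s t ∩ g ⁻¹' {c} with hT₁
  have hT₁closed : IsClosed T₁ := hg.preimage_isClosed_of_isClosed isClosed_Icc isClosed_singleton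
  have hT₁ne : T₁.Nonempty := ⟨s, Set.left_mem_Icc.mpr hst, by simp [hgs]⟩
  have hT₁bdd : BddAbove T₁ := ⟨t, fun x hx => hx.1.2⟩
  set u := sSup T₁ with hu
  have huT : u ∈ T₁ := hT₁closed.csSup_mem hT₁ne hT₁bdd
  have hgu : g u = c := huT.2
  have hut : u ≤ t := huT.1.2
  have hsu : s ≤ u := huT.1.1
  set T₂ : Set ℝ := Set.Icc u t ∩ g ⁻¹' {d} with hT₂
  have hsub2 : Set.Icc u t ⊆ Set.Icc s t := Set.Icc_subset_Icc hsu le_rfl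
  have hT₂closed : IsClosed T₂ :=
    (hg.mono hsub2).preimage_isClosed_of_isClosed isClosed_Icc isClosed_singleton
  have hT₂ne : T₂.Nonempty := ⟨t, Set.right_mem_Icc.mpr hut, by simp [hgt]⟩
  have hT₂bdd : BddBelow T₂ := ⟨u, fun x hx => hx.1.1⟩
  set v := sInf T₂ with hv
  have hvT : v ∈ T₂ := hT₂closed.csInf_mem hT₂ne hT₂bdd
  have hgv : g v = d := hvT.2
  have huv : u ≤ v := hvT.1.1
  have hvt : v ≤ t := hvT.1.2
  have hsubuv : Set.Icc u v ⊆ Set.Icc s t := Set.Icc_subset_Icc hsu hvt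
  have hguv : ContinuousOn g (Set.Icc u v) := hg.mono hsubuv
  refine ⟨u, v, huv, hsubuv, ?_⟩
  apply Set.Subset.antisymm
  · rintro y ⟨x, hx, rfl⟩
    constructor
    · by_contra hlt
      push_neg at hlt
      have hx2 : x ≤ v := hx.2
      have : c ∈ Set.Icc (g x) (g v) := ⟨le_of_lt hlt, by rw [hgv]; exact hcd⟩
      obtain ⟨z, hz, hgz⟩ := intermediate_value_Icc hx2 (hguv.mono (Set.Icc_subset_Icc hx.1 le_rfl)) this
      have hzT : z ∈ T₁ := ⟨⟨le_trans hsu (le_trans hx.1 hz.1), le_trans hz.2 hvt⟩, by simp [hgz]⟩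
      have : z ≤ u := le_csSup hT₁bdd hzT
      have hzu : z = u := le_antisymm this (le_trans hx.1 hz.1)
      have hxu : x = u := le_antisymm (by linarith [hz.1, hzu]) hx.1
      rw [hxu, hgu] at hlt
      exact lt_irrefl c hlt
    · by_contra hlt
      push_neg at hlt
      have : d ∈ Set.Icc (g u) (g x) := ⟨by rw [hgu]; exact hcd, le_of_lt hlt⟩
      obtain ⟨z, hz, hgz⟩ := intermediate_value_Icc hx.1 (hguv.mono (Set.Icc_subset_Icc le_rfl hx.2)) this
      have hzT : z ∈ T₂ := ⟨⟨hz.1, le_trans hz.2 (le_trans hx.2 hvt)⟩, by simp [hgz]⟩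
      have : v ≤ z := csInf_le hT₂bdd hzT
      have hzv : z = v := le_antisymm (le_trans hz.2 hx.2) this
      have hxv : x = v := le_antisymm hx.2 (by linarith [hz.2, hzv])
      rw [hxv, hgv] at hlt
      exact lt_irrefl d hlt
  · have := intermediate_value_Icc huv hguv
    rw [hgu, hgv] at this
    exact this

lemma covering {g : ℝ → ℝ} {α β c d : ℝ} (hαβ : α ≤ β) (hcd : c ≤ d)
    (hg : ContinuousOn g (Set.Icc α β)) (hsub : Set.Icc c d ⊆ g '' Set.Icc α β) :
    ∃ α' β', α' ≤ β' ∧ Set.Icc α' β' ⊆ Set.Icc α β ∧ g '' Set.Icc α' β' = Set.Icc c d := by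
  obtain ⟨u₀, hu₀, hgu₀⟩ := hsub (Set.left_mem_Icc.mpr hcd)
  obtain ⟨v₀, hv₀, hgv₀⟩ := hsub (Set.right_mem_Icc.mpr hcd)
  rcases le_or_gt u₀ v₀ with h | h
  · have hsub' : Set.Icc u₀ v₀ ⊆ Set.Icc α β := Set.Icc_subset_Icc hu₀.1 hv₀.2
    obtain ⟨s', t', h1, h2, h3⟩ := cover_aux h (hg.mono hsub') hgu₀ hgv₀ hcd
    exact ⟨s', t', h1, h2.trans hsub', h3⟩
  · -- reflect
    set r : ℝ → ℝ := fun x => u₀ + v₀ - x with hr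
    have hsub' : Set.Icc v₀ u₀ ⊆ Set.Icc α β := Set.Icc_subset_Icc hv₀.1 hu₀.2
    have hrmaps : ∀ x ∈ Set.Icc v₀ u₀, r x ∈ Set.Icc v₀ u₀ := by
      intro x hx; simp only [hr, Set.mem_Icc] at *; constructor <;> linarith [hx.1, hx.2]
    have hcontr : ContinuousOn (g ∘ r) (Set.Icc v₀ u₀) := by
      apply ContinuousOn.comp (hg.mono hsub')
      · exact (continuous_const.sub continuous_id).continuousOn
      · exact hrmaps
    have e1 : (g ∘ r) v₀ = c := by simp [hr, hgu₀]
    have e2 : (g ∘ r) u₀ = d := by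
      simp only [hr, Function.comp_apply]
      rw [show u₀ + v₀ - u₀ = v₀ by ring, hgv₀]
    obtain ⟨s', t', h1, h2, h3⟩ := cover_aux (le_of_lt h) hcontr e1 e2 hcd
    refine ⟨u₀ + v₀ - t', u₀ + v₀ - s', by linarith, ?_, ?_⟩
    · intro x hx
      have hs' := h2 (Set.left_mem_Icc.mpr h1)
      have ht' := h2 (Set.right_mem_Icc.mpr h1)
      apply hsub'
      simp only [Set.mem_Icc] at *
      constructor <;> linarith [hs'.1, hs'.2, ht'.1, ht'.2, hx.1, hx.2]
    · have himg : Set.Icc (u₀ + v₀ - t') (u₀ + v₀ - s') = r '' Set.Icc s' t' := by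
        rw [hr]
        rw [show (fun x => u₀ + v₀ - x) '' Set.Icc s' t' = (fun x => (u₀ + v₀) - x) '' Set.Icc s' t' by rfl]
        rw [Set.image_const_sub_Icc]
      rw [himg, ← Set.image_comp]
      exact h3



lemma mono_chain {t : ℕ → ℝ} {K : ℕ} (h : ∀ i < K, t i < t (i+1)) :
    ∀ {i j}, i ≤ j → j ≤ K → t i ≤ t j := by
  intro i j hij hjK
  induction hij with
  | refl => exact le_rfl
  | @step n hn ih =>
    exact le_trans (ih (by omega)) (le_of_lt (h n (by omega)))

lemma germ_right {f : ℝ → ℝ} {lo hi a : ℝ} (hpm : PiecewiseMonotoneOn f lo hi)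
    (halo : lo ≤ a) (hahi : a < hi) :
    ∃ η > 0, a + η ≤ hi ∧
      (StrictMonoOn f (Set.Icc a (a+η)) ∨ StrictAntiOn f (Set.Icc a (a+η))) := by
  obtain ⟨K, t, hK, ht0, htK, hts, hmono⟩ := hpm
  set P : ℕ → Prop := fun i => t i ≤ a with hP
  have hP0 : P 0 := by simp [hP, ht0, halo]
  set m := Nat.findGreatest P K with hm
  have hPm : P m := Nat.findGreatest_spec (Nat.zero_le K) hP0
  have hmK : m ≤ K := Nat.findGreatest_le K
  have hmltK : m < K := by
    rcases lt_or_eq_of_le hmK with h | h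
    · exact h
    · exfalso; rw [h] at hPm; simp only [hP, htK] at hPm; linarith
  have hnP : ¬ P (m+1) := Nat.findGreatest_is_greatest (Nat.lt_succ_self m) hmltK
  have htm1 : a < t (m+1) := by simpa [hP] using hnP
  refine ⟨t (m+1) - a, by linarith, ?_, ?_⟩
  · have : t (m+1) ≤ t K := mono_chain hts hmltK le_rfl
    rw [htK] at this; linarith
  · have hsub : Set.Icc a (a + (t (m+1) - a)) ⊆ Set.Icc (t m) (t (m+1)) := by
      rw [show a + (t (m+1) - a) = t (m+1) by ring]
      exact Set.Icc_subset_Icc hPm le_rfl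
    rcases hmono m hmltK with h | h
    · exact Or.inl (h.mono hsub)
    · exact Or.inr (h.mono hsub)

lemma germ_left {f : ℝ → ℝ} {lo hi a : ℝ} (hpm : PiecewiseMonotoneOn f lo hi)
    (halo : lo < a) (hahi : a ≤ hi) :
    ∃ η > 0, lo ≤ a - η ∧
      (StrictMonoOn f (Set.Icc (a-η) a) ∨ StrictAntiOn f (Set.Icc (a-η) a)) := by
  obtain ⟨K, t, hK, ht0, htK, hts, hmono⟩ := hpm
  set P : ℕ → Prop := fun i => t i < a with hP
  have hP0 : P 0 := by simp [hP, ht0, halo]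
  set m := Nat.findGreatest P K with hm
  have hPm : P m := Nat.findGreatest_spec (Nat.zero_le K) hP0
  have hmK : m ≤ K := Nat.findGreatest_le K
  have hmltK : m < K := by
    rcases lt_or_eq_of_le hmK with h | h
    · exact h
    · exfalso; rw [h] at hPm; simp only [hP, htK] at hPm; linarith
  have hnP : ¬ P (m+1) := Nat.findGreatest_is_greatest (Nat.lt_succ_self m) hmltK
  have htm1 : a ≤ t (m+1) := by simpa [hP] using hnP
  refine ⟨a - t m, by simp only [hP] at hPm; linarith, ?_, ?_⟩
  · have : t 0 ≤ t m := mono_chain hts (Nat.zero_le m) hmK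
    rw [ht0] at this; linarith
  · have hsub : Set.Icc (a - (a - t m)) a ⊆ Set.Icc (t m) (t (m+1)) := by
      rw [show a - (a - t m) = t m by ring]
      exact Set.Icc_subset_Icc le_rfl htm1
    rcases hmono m hmltK with h | h
    · exact Or.inl (h.mono hsub)
    · exact Or.inr (h.mono hsub)


lemma iter_close {f : ℝ → ℝ} {lo hi a : ℝ}
    (hcont : ContinuousOn f (Set.Icc lo hi))
    (hmaps : Set.MapsTo f (Set.Icc lo hi) (Set.Icc lo hi))
    (ha : a ∈ Set.Icc lo hi) (hfa : f a = a) :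
    ∀ (n : ℕ) (ε : ℝ), 0 < ε → ∃ δ > 0, ∀ y ∈ Set.Icc lo hi, |y - a| < δ →
      ∀ j ≤ n, |f^[j] y - a| < ε := by
  intro n
  induction n with
  | zero =>
    intro ε hε
    exact ⟨ε, hε, fun y _ hy j hj => by
      interval_cases j
      simpa using hy⟩
  | succ n ih =>
    intro ε hε
    obtain ⟨δn, hδn, hn⟩ := ih ε hε
    have hca : ContinuousWithinAt f (Set.Icc lo hi) a := hcont a ha
    rw [Metric.continuousWithinAt_iff] at hca
    obtain ⟨δ₁, hδ₁, h₁⟩ := hca δn hδn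
    refine ⟨min δ₁ ε, lt_min hδ₁ hε, ?_⟩
    intro y hy hyδ j hj
    rcases Nat.eq_zero_or_pos j with rfl | hj0
    · simpa using lt_of_lt_of_le hyδ (min_le_right _ _)
    · obtain ⟨j', rfl⟩ := Nat.exists_eq_succ_of_ne_zero (Nat.pos_iff_ne_zero.mp hj0)
      rw [Function.iterate_succ_apply]
      apply hn (f y) (hmaps hy) _ j' (Nat.succ_le_succ_iff.mp hj)
      have : dist y a < δ₁ := by
        rw [Real.dist_eq]; exact lt_of_lt_of_le hyδ (min_le_left _ _)
      have := h₁ hy this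
      rw [Real.dist_eq, hfa] at this
      exact this

lemma chain {f : ℝ → ℝ} {lo hi a : ℝ}
    (hcont : ContinuousOn f (Set.Icc lo hi))
    (hmaps : Set.MapsTo f (Set.Icc lo hi) (Set.Icc lo hi))
    (ha : a ∈ Set.Icc lo hi)
    {k : ℕ} (hk : 0 < k) {e : ℕ → ℝ}
    (he : ∀ j < k, e j ∈ Set.Icc lo hi ∧ e j ≠ a)
    (hloop : ∀ j < k, Set.uIcc a (e ((j + 1) % k)) ⊆ f '' Set.uIcc a (e j)) :
    ∀ j ≤ k, ∃ u v : ℝ, u ≤ v ∧ Set.Icc u v ⊆ Set.uIcc a (e 0) ∧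
      (∀ i < j, f^[i] '' Set.Icc u v ⊆ Set.uIcc a (e i)) ∧
      f^[j] '' Set.Icc u v = Set.uIcc a (e (j % k)) := by
  have hIsub : ∀ j < k, Set.uIcc a (e j) ⊆ Set.Icc lo hi := fun j hj =>
    Set.uIcc_subset_Icc ha (he j hj).1
  intro j hjk
  induction j with
  | zero =>
    refine ⟨a ⊓ e 0, a ⊔ e 0, inf_le_sup, ?_, by simp, ?_⟩
    · rw [Set.uIcc]
    · rw [Nat.zero_mod, Function.iterate_zero, Set.image_id, Set.uIcc]
  | succ j ih =>
    have hjk' : j < k := Nat.lt_of_succ_le hjk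
    obtain ⟨u, v, huv, hQ0, hQit, hQj⟩ := ih (le_of_lt hjk')
    rw [Nat.mod_eq_of_lt hjk'] at hQj
    -- first covering: K ⊆ I_j with f '' K = I_{(j+1)%k}
    have h1 : Set.uIcc a (e ((j+1) % k)) ⊆ f '' Set.Icc (a ⊓ e j) (a ⊔ e j) := by
      rw [← Set.uIcc]; exact hloop j hjk'
    obtain ⟨c, d, hcd, hKsub, hKimg⟩ :=
      covering (α := a ⊓ e j) (β := a ⊔ e j) inf_le_sup
        (show a ⊓ e ((j+1)%k) ≤ a ⊔ e ((j+1)%k) from inf_le_sup)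
        (hcont.mono (by rw [← Set.uIcc]; exact hIsub j hjk'))
        (by rw [← Set.uIcc, ← Set.uIcc]; exact hloop j hjk')
    -- second covering: Q' ⊆ Q with f^[j] '' Q' = K
    have h2 : Set.Icc c d ⊆ f^[j] '' Set.Icc u v := by
      rw [hQj, Set.uIcc]; exact hKsub
    obtain ⟨u', v', huv', hQ'sub, hQ'img⟩ :=
      covering huv hcd
        ((iter_cont hcont hmaps j).mono (hQ0.trans (hIsub 0 hk)))
        h2
    refine ⟨u', v', huv', hQ'sub.trans hQ0, ?_, ?_⟩
    · intro i hi
      rcases Nat.lt_succ_iff_lt_or_eq.mp hi with hlt | rfl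
      · exact (Set.image_mono hQ'sub).trans (hQit i hlt)
      · rw [hQ'img, Set.uIcc]; exact hKsub
    · rw [Function.iterate_succ', Set.image_comp, hQ'img, hKimg, Set.uIcc]


lemma lemmaR {f : ℝ → ℝ} {lo hi a : ℝ}
    (hcont : ContinuousOn f (Set.Icc lo hi))
    (hmaps : Set.MapsTo f (Set.Icc lo hi) (Set.Icc lo hi))
    (hpm : PiecewiseMonotoneOn f lo hi)
    (ha : a ∈ Set.Icc lo hi) (hfa : f a = a)
    (hauniq : ∀ b ∈ Set.Icc lo hi, f b = b → b = a)
    {k : ℕ} (hk : 0 < k) {e : ℕ → ℝ}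
    (hene : ∀ j < k, e j ≠ a)
    (hnot : ¬ (Even k ∧ ∀ j < k,
        ((e j < a ∧ a < e ((j + 1) % k)) ∨ (e ((j + 1) % k) < a ∧ a < e j))))
    {v : ℝ} (hav : a < v) (hvhi : v ≤ hi)
    (H1 : ∀ y ∈ Set.Ioc a v, y < f^[k] y)
    (H2 : ∀ y ∈ Set.Icc a v, ∀ j < k, f^[j] y ∈ Set.uIcc a (e j)) : False := by
  have halo : lo ≤ a := ha.1
  have hahi : a < hi := lt_of_lt_of_le hav hvhi
  obtain ⟨η, hη, hηhi, hgerm⟩ := germ_right hpm halo hahi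
  rcases hgerm with hmono | hanti
  · -- f increasing just right of a : orbit stays in (a, y0], decreasing
    set y0 := min v (a + η) with hy0
    have hy0a : a < y0 := lt_min hav (by linarith)
    have hy0v : y0 ≤ v := min_le_left _ _
    have hy0η : y0 ≤ a + η := min_le_right _ _
    have hy0hi : y0 ≤ hi := le_trans hy0v hvhi
    have hclaim : ∀ j, f^[j] y0 ∈ Set.Ioc a y0 := by
      intro j
      induction j with
      | zero => exact ⟨hy0a, le_rfl⟩
      | succ j ih =>
        set z := f^[j] y0 with hz
        have hzIcc : z ∈ Set.Icc lo hi := ⟨le_trans halo (le_of_lt ih.1), le_trans ih.2 hy0hi⟩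
        have hfz1 : f z < z := fix_lt hcont hmaps ha hauniq hzIcc ih.1
        have hfz2 : a < f z := by
          have := hmono (Set.left_mem_Icc.mpr (by linarith)) ⟨le_of_lt ih.1, le_trans ih.2 hy0η⟩ ih.1
          rwa [hfa] at this
        rw [Function.iterate_succ_apply', ← hz]
        exact ⟨hfz2, le_trans (le_of_lt hfz1) ih.2⟩
    have h1 := H1 y0 ⟨hy0a, hy0v⟩
    have h2 := (hclaim k).2
    linarith
  · -- f decreasing just right of a
    have key : ∀ z, a < z → z ≤ a + η → f z < a := by
      intro z h1 h2
      have := hanti (Set.left_mem_Icc.mpr (by linarith)) ⟨le_of_lt h1, h2⟩ h1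
      rwa [hfa] at this
    have hloa : lo < a := by
      set y1 := min v (a + η) with hy1
      have hy1a : a < y1 := lt_min hav (by linarith)
      have h1 : f y1 < a := key y1 hy1a (min_le_right _ _)
      have h2 : lo ≤ f y1 :=
        (hmaps ⟨le_trans halo (le_of_lt hy1a), le_trans (min_le_left _ _) hvhi⟩).1
      linarith
    obtain ⟨η', hη', hη'lo, hgermL⟩ := germ_left hpm hloa (le_of_lt hahi)
    rcases hgermL with hmonoL | hantiL
    · -- f increasing just left of a : after one step, orbit stays in [a-η', a)
      have hca : ContinuousWithinAt f (Set.Icc lo hi) a := hcont a ha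
      rw [Metric.continuousWithinAt_iff] at hca
      obtain ⟨δ, hδ, hδp⟩ := hca η' hη'
      set y := min v (min (a + η) (a + δ/2)) with hy
      have hya : a < y := lt_min hav (lt_min (by linarith) (by linarith))
      have hyv : y ≤ v := min_le_left _ _
      have hyIcc : y ∈ Set.Icc lo hi := ⟨le_trans halo (le_of_lt hya), le_trans hyv hvhi⟩
      have hyη : y ≤ a + η := le_trans (min_le_right _ _) (min_le_left _ _)
      have hyδ : dist y a < δ := by
        rw [Real.dist_eq, abs_of_pos (by linarith : (0:ℝ) < y - a)]
        have : y ≤ a + δ/2 := le_trans (min_le_right _ _) (min_le_right _ _)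
        linarith
      have hfy1 : f y < a := key y hya hyη
      have hfy2 : a - η' < f y := by
        have := hδp hyIcc hyδ
        rw [Real.dist_eq, hfa] at this
        have := abs_lt.mp this
        linarith [this.1]
      have hclaim : ∀ j, f^[j] (f y) ∈ Set.Ico (a - η') a := by
        intro j
        induction j with
        | zero => exact ⟨le_of_lt hfy2, hfy1⟩
        | succ j ih =>
          set z := f^[j] (f y) with hz
          have hzIcc : z ∈ Set.Icc lo hi := ⟨le_trans hη'lo ih.1, le_trans (le_of_lt ih.2) ha.2⟩
          have hfz1 : z < f z := fix_gt hcont hmaps ha hauniq hzIcc ih.2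
          have hfz2 : f z < a := by
            have := hmonoL ⟨ih.1, le_of_lt ih.2⟩ (Set.right_mem_Icc.mpr (by linarith)) ih.2
            rwa [hfa] at this
          rw [Function.iterate_succ_apply', ← hz]
          exact ⟨le_trans ih.1 (le_of_lt hfz1), hfz2⟩
      have hk' : f^[k] y = f^[k-1] (f y) := by
        conv_lhs => rw [← Nat.succ_pred_eq_of_pos hk]
        rw [Function.iterate_succ_apply, Nat.pred_eq_sub_one]
      have h1 := H1 y ⟨hya, hyv⟩
      have h2 := (hclaim (k-1)).2
      rw [hk'] at h1
      linarith
    · -- f decreasing on both sides : alternation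
      set ε := min η η' with hε
      have hε0 : 0 < ε := lt_min hη hη'
      obtain ⟨δ, hδ, hδp⟩ := iter_close hcont hmaps ha hfa k ε hε0
      set y := min v (a + δ/2) with hy
      have hya : a < y := lt_min hav (by linarith)
      have hyv : y ≤ v := min_le_left _ _
      have hyIcc : y ∈ Set.Icc lo hi := ⟨le_trans halo (le_of_lt hya), le_trans hyv hvhi⟩
      have hyδ : |y - a| < δ := by
        rw [abs_of_pos (by linarith : (0:ℝ) < y - a)]
        have : y ≤ a + δ/2 := min_le_right _ _
        linarith
      have hclose : ∀ j ≤ k, |f^[j] y - a| < ε := hδp y hyIcc hyδ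
      have halt : ∀ j ≤ k, (Even j → a < f^[j] y) ∧ (¬ Even j → f^[j] y < a) := by
        intro j
        induction j with
        | zero =>
          intro _
          exact ⟨fun _ => by simpa using hya, fun h => absurd _root_.Even.zero h⟩
        | succ j ih =>
          intro hjk
          have hjk' : j ≤ k := le_of_lt (Nat.lt_of_succ_le hjk)
          have ihj := ih hjk'
          have hcl := hclose j hjk'
          rcases Nat.even_or_odd j with hev | hodd
          · -- z > a, z < a + ε ≤ a + η : next below a
            have hz1 : a < f^[j] y := ihj.1 hev
            have hz2 : f^[j] y ≤ a + η := by
              have := (abs_lt.mp hcl).2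
              have : f^[j] y < a + ε := by linarith
              have hεη : ε ≤ η := min_le_left _ _
              linarith
            have hnext : f^[j+1] y < a := by
              rw [Function.iterate_succ_apply']
              exact key _ hz1 hz2
            refine ⟨fun h => absurd h (by simpa [Nat.even_add_one] using hev), fun _ => hnext⟩
          · -- z < a, z ≥ a - ε ≥ a - η' : next above a
            have hz1 : f^[j] y < a := ihj.2 (Nat.not_even_iff_odd.mpr hodd)
            have hz2 : a - η' ≤ f^[j] y := by
              have := (abs_lt.mp hcl).1
              have hεη : ε ≤ η' := min_le_right _ _
              linarith
            have hnext : a < f^[j+1] y := by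
              rw [Function.iterate_succ_apply']
              have := hantiL ⟨hz2, le_of_lt hz1⟩ (Set.right_mem_Icc.mpr (by linarith)) hz1
              rwa [hfa] at this
            refine ⟨fun _ => hnext, fun h => absurd (Nat.even_add_one.mpr (Nat.not_even_iff_odd.mpr hodd)) h⟩
      have hkeven : Even k := by
        by_contra hodd
        have h1 := (halt k le_rfl).2 hodd
        have h2 := H1 y ⟨hya, hyv⟩
        linarith
      apply hnot
      refine ⟨hkeven, ?_⟩
      have hsid : ∀ i < k, (a < e i ↔ Even i) := by
        intro i hi
        have hmem : f^[i] y ∈ Set.uIcc a (e i) := H2 y ⟨le_of_lt hya, hyv⟩ i hi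
        have hilek : i ≤ k := le_of_lt hi
        have hne : f^[i] y ≠ a := by
          rcases Nat.even_or_odd i with hev | hodd
          · exact ne_of_gt ((halt i hilek).1 hev)
          · exact ne_of_lt ((halt i hilek).2 (Nat.not_even_iff_odd.mpr hodd))
        have hiff := side_det hmem hne (hene i hi)
        constructor
        · intro hae
          by_contra hodd
          have := (halt i hilek).2 hodd
          have := hiff.mpr hae
          linarith
        · intro hev
          exact hiff.mp ((halt i hilek).1 hev)
      intro j hj
      set j' := (j + 1) % k with hj'def
      have hj' : j' < k := Nat.mod_lt _ hk
      have hpar : Even j' ↔ ¬ Even j := by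
        rcases Nat.lt_or_ge (j+1) k with hlt | hge
        · rw [hj'def, Nat.mod_eq_of_lt hlt, Nat.even_add_one]
        · have hjk1 : j + 1 = k := le_antisymm (Nat.succ_le_of_lt hj) hge
          have hj'0 : j' = 0 := by rw [hj'def, hjk1, Nat.mod_self]
          rw [hj'0]
          have : Even (j+1) := hjk1 ▸ hkeven
          simp only [_root_.Even.zero, true_iff]
          exact (Nat.even_add_one.mp this)
      rcases Nat.even_or_odd j with hev | hodd
      · right
        refine ⟨?_, (hsid j hj).mpr hev⟩
        have hnev' : ¬ Even j' := fun h => (hpar.mp h) hev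
        have := (hsid j' hj').not.mpr hnev'
        push_neg at this
        exact lt_of_le_of_ne this (hene j' hj')
      · left
        have hnev : ¬ Even j := Nat.not_even_iff_odd.mpr hodd
        refine ⟨?_, (hsid j' hj').mpr (hpar.mpr hnev)⟩
        have := (hsid j hj).not.mpr hnev
        push_neg at this
        exact lt_of_le_of_ne this (hene j hj)


lemma lemmaL {f : ℝ → ℝ} {lo hi a : ℝ}
    (hcont : ContinuousOn f (Set.Icc lo hi))
    (hmaps : Set.MapsTo f (Set.Icc lo hi) (Set.Icc lo hi))
    (hpm : PiecewiseMonotoneOn f lo hi)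
    (ha : a ∈ Set.Icc lo hi) (hfa : f a = a)
    (hauniq : ∀ b ∈ Set.Icc lo hi, f b = b → b = a)
    {k : ℕ} (hk : 0 < k) {e : ℕ → ℝ}
    (hene : ∀ j < k, e j ≠ a)
    (hnot : ¬ (Even k ∧ ∀ j < k,
        ((e j < a ∧ a < e ((j + 1) % k)) ∨ (e ((j + 1) % k) < a ∧ a < e j))))
    {v : ℝ} (hav : v < a) (hvlo : lo ≤ v)
    (H1 : ∀ y ∈ Set.Ico v a, f^[k] y < y)
    (H2 : ∀ y ∈ Set.Icc v a, ∀ j < k, f^[j] y ∈ Set.uIcc a (e j)) : False := by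
  have hahi : a ≤ hi := ha.2
  have hloa : lo < a := lt_of_le_of_lt hvlo hav
  obtain ⟨η', hη', hη'lo, hgermL⟩ := germ_left hpm hloa hahi
  rcases hgermL with hmonoL | hantiL
  · -- f increasing just left of a : orbit stays in [y0, a), increasing
    set y0 := max v (a - η') with hy0
    have hy0a : y0 < a := max_lt hav (by linarith)
    have hy0v : v ≤ y0 := le_max_left _ _
    have hy0η : a - η' ≤ y0 := le_max_right _ _
    have hy0lo : lo ≤ y0 := le_trans hvlo hy0v
    have hclaim : ∀ j, f^[j] y0 ∈ Set.Ico y0 a := by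
      intro j
      induction j with
      | zero => exact ⟨le_rfl, hy0a⟩
      | succ j ih =>
        set z := f^[j] y0 with hz
        have hzIcc : z ∈ Set.Icc lo hi := ⟨le_trans hy0lo ih.1, le_trans (le_of_lt ih.2) hahi⟩
        have hfz1 : z < f z := fix_gt hcont hmaps ha hauniq hzIcc ih.2
        have hfz2 : f z < a := by
          have := hmonoL ⟨le_trans hy0η ih.1, le_of_lt ih.2⟩ (Set.right_mem_Icc.mpr (by linarith)) ih.2
          rwa [hfa] at this
        rw [Function.iterate_succ_apply', ← hz]
        exact ⟨le_trans ih.1 (le_of_lt hfz1), hfz2⟩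
    have h1 := H1 y0 ⟨hy0v, hy0a⟩
    have h2 := (hclaim k).1
    linarith
  · -- f decreasing just left of a
    have key : ∀ z, a - η' ≤ z → z < a → a < f z := by
      intro z h1 h2
      have := hantiL ⟨h1, le_of_lt h2⟩ (Set.right_mem_Icc.mpr (by linarith)) h2
      rwa [hfa] at this
    have hahi' : a < hi := by
      set y1 := max v (a - η') with hy1
      have hy1a : y1 < a := max_lt hav (by linarith)
      have h1 : a < f y1 := key y1 (le_max_right _ _) hy1a
      have h2 : f y1 ≤ hi :=
        (hmaps ⟨le_trans hvlo (le_max_left _ _), le_trans (le_of_lt hy1a) hahi⟩).2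
      linarith
    obtain ⟨η, hη, hηhi, hgerm⟩ := germ_right hpm ha.1 hahi'
    rcases hgerm with hmono | hanti
    · -- f increasing just right of a : after one step, orbit stays in (a, a+η]
      have hca : ContinuousWithinAt f (Set.Icc lo hi) a := hcont a ha
      rw [Metric.continuousWithinAt_iff] at hca
      obtain ⟨δ, hδ, hδp⟩ := hca η hη
      set y := max v (max (a - η') (a - δ/2)) with hy
      have hya : y < a := max_lt hav (max_lt (by linarith) (by linarith))
      have hyv : v ≤ y := le_max_left _ _
      have hyIcc : y ∈ Set.Icc lo hi := ⟨le_trans hvlo hyv, le_trans (le_of_lt hya) hahi⟩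
      have hyη : a - η' ≤ y := le_trans (le_max_left _ _) (le_max_right _ _)
      have hyδ : dist y a < δ := by
        rw [Real.dist_eq, abs_of_neg (by linarith : y - a < (0:ℝ))]
        have : a - δ/2 ≤ y := le_trans (le_max_right _ _) (le_max_right _ _)
        linarith
      have hfy1 : a < f y := key y hyη hya
      have hfy2 : f y < a + η := by
        have := hδp hyIcc hyδ
        rw [Real.dist_eq, hfa] at this
        have := abs_lt.mp this
        linarith [this.2]
      have hclaim : ∀ j, f^[j] (f y) ∈ Set.Ioc a (a + η) := by
        intro j
        induction j with
        | zero => exact ⟨hfy1, le_of_lt hfy2⟩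
        | succ j ih =>
          set z := f^[j] (f y) with hz
          have hzIcc : z ∈ Set.Icc lo hi := ⟨le_trans ha.1 (le_of_lt ih.1), le_trans ih.2 hηhi⟩
          have hfz1 : f z < z := fix_lt hcont hmaps ha hauniq hzIcc ih.1
          have hfz2 : a < f z := by
            have := hmono (Set.left_mem_Icc.mpr (by linarith)) ⟨le_of_lt ih.1, ih.2⟩ ih.1
            rwa [hfa] at this
          rw [Function.iterate_succ_apply', ← hz]
          exact ⟨hfz2, le_trans (le_of_lt hfz1) ih.2⟩
      have hk' : f^[k] y = f^[k-1] (f y) := by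
        conv_lhs => rw [← Nat.succ_pred_eq_of_pos hk]
        rw [Function.iterate_succ_apply, Nat.pred_eq_sub_one]
      have h1 := H1 y ⟨hyv, hya⟩
      have h2 := (hclaim (k-1)).1
      rw [hk'] at h1
      linarith
    · -- f decreasing on both sides : alternation
      set ε := min η η' with hε
      have hε0 : 0 < ε := lt_min hη hη'
      obtain ⟨δ, hδ, hδp⟩ := iter_close hcont hmaps ha hfa k ε hε0
      set y := max v (a - δ/2) with hy
      have hya : y < a := max_lt hav (by linarith)
      have hyv : v ≤ y := le_max_left _ _
      have hyIcc : y ∈ Set.Icc lo hi := ⟨le_trans hvlo hyv, le_trans (le_of_lt hya) hahi⟩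
      have hyδ : |y - a| < δ := by
        rw [abs_of_neg (by linarith : y - a < (0:ℝ))]
        have : a - δ/2 ≤ y := le_max_right _ _
        linarith
      have hclose : ∀ j ≤ k, |f^[j] y - a| < ε := hδp y hyIcc hyδ
      have halt : ∀ j ≤ k, (Even j → f^[j] y < a) ∧ (¬ Even j → a < f^[j] y) := by
        intro j
        induction j with
        | zero =>
          intro _
          exact ⟨fun _ => by simpa using hya, fun h => absurd _root_.Even.zero h⟩
        | succ j ih =>
          intro hjk
          have hjk' : j ≤ k := le_of_lt (Nat.lt_of_succ_le hjk)
          have ihj := ih hjk'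
          have hcl := hclose j hjk'
          rcases Nat.even_or_odd j with hev | hodd
          · -- z < a, z ≥ a - ε ≥ a - η' : next above a
            have hz1 : f^[j] y < a := ihj.1 hev
            have hz2 : a - η' ≤ f^[j] y := by
              have := (abs_lt.mp hcl).1
              have hεη : ε ≤ η' := min_le_right _ _
              linarith
            have hnext : a < f^[j+1] y := by
              rw [Function.iterate_succ_apply']
              exact key _ hz2 hz1
            refine ⟨fun h => absurd h (by simpa [Nat.even_add_one] using hev), fun _ => hnext⟩
          · -- z > a, z ≤ a + ε ≤ a + η : next below a
            have hz1 : a < f^[j] y := ihj.2 (Nat.not_even_iff_odd.mpr hodd)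
            have hz2 : f^[j] y ≤ a + η := by
              have := (abs_lt.mp hcl).2
              have hεη : ε ≤ η := min_le_left _ _
              linarith
            have hnext : f^[j+1] y < a := by
              rw [Function.iterate_succ_apply']
              have := hanti (Set.left_mem_Icc.mpr (by linarith)) ⟨le_of_lt hz1, hz2⟩ hz1
              rwa [hfa] at this
            refine ⟨fun _ => hnext, fun h => absurd (Nat.even_add_one.mpr (Nat.not_even_iff_odd.mpr hodd)) h⟩
      have hkeven : Even k := by
        by_contra hodd
        have h1 := (halt k le_rfl).2 hodd
        have h2 := H1 y ⟨hyv, hya⟩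
        linarith
      apply hnot
      refine ⟨hkeven, ?_⟩
      have hsid : ∀ i < k, (a < e i ↔ ¬ Even i) := by
        intro i hi
        have hmem : f^[i] y ∈ Set.uIcc a (e i) := H2 y ⟨hyv, le_of_lt hya⟩ i hi
        have hilek : i ≤ k := le_of_lt hi
        have hne : f^[i] y ≠ a := by
          rcases Nat.even_or_odd i with hev | hodd
          · exact ne_of_lt ((halt i hilek).1 hev)
          · exact ne_of_gt ((halt i hilek).2 (Nat.not_even_iff_odd.mpr hodd))
        have hiff := side_det hmem hne (hene i hi)
        constructor
        · intro hae
          intro hev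
          have := (halt i hilek).1 hev
          have := hiff.mpr hae
          linarith
        · intro hnev
          exact hiff.mp ((halt i hilek).2 hnev)
      intro j hj
      set j' := (j + 1) % k with hj'def
      have hj' : j' < k := Nat.mod_lt _ hk
      have hpar : Even j' ↔ ¬ Even j := by
        rcases Nat.lt_or_ge (j+1) k with hlt | hge
        · rw [hj'def, Nat.mod_eq_of_lt hlt, Nat.even_add_one]
        · have hjk1 : j + 1 = k := le_antisymm (Nat.succ_le_of_lt hj) hge
          have hj'0 : j' = 0 := by rw [hj'def, hjk1, Nat.mod_self]
          rw [hj'0]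
          have : Even (j+1) := hjk1 ▸ hkeven
          simp only [_root_.Even.zero, true_iff]
          exact (Nat.even_add_one.mp this)
      rcases Nat.even_or_odd j with hev | hodd
      · left
        refine ⟨?_, (hsid j' hj').mpr (fun h => (hpar.mp h) hev)⟩
        have := (hsid j hj).not.mpr (by simpa using hev)
        push_neg at this
        exact lt_of_le_of_ne this (hene j hj)
      · right
        have hnev : ¬ Even j := Nat.not_even_iff_odd.mpr hodd
        refine ⟨?_, (hsid j hj).mpr hnev⟩
        have hev' : Even j' := hpar.mpr hnev
        have := (hsid j' hj').not.mpr (by simpa using hev')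
        push_neg at this
        exact lt_of_le_of_ne this (hene j' hj')


lemma exists_pt {f : ℝ → ℝ} {lo hi a : ℝ}
    (hcont : ContinuousOn f (Set.Icc lo hi))
    (hmaps : Set.MapsTo f (Set.Icc lo hi) (Set.Icc lo hi))
    (hpm : PiecewiseMonotoneOn f lo hi)
    (ha : a ∈ Set.Icc lo hi) (hfa : f a = a)
    (hauniq : ∀ b ∈ Set.Icc lo hi, f b = b → b = a)
    {k : ℕ} (hk : 0 < k) {e : ℕ → ℝ}
    (he : ∀ j < k, e j ∈ Set.Icc lo hi ∧ e j ≠ a)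
    (hloop : ∀ j < k, Set.uIcc a (e ((j + 1) % k)) ⊆ f '' Set.uIcc a (e j))
    (hnot : ¬ (Even k ∧ ∀ j < k,
        ((e j < a ∧ a < e ((j + 1) % k)) ∨ (e ((j + 1) % k) < a ∧ a < e j)))) :
    ∃ x ∈ Set.uIcc a (e 0), x ≠ a ∧
      (∀ j < k, f^[j] x ∈ Set.uIcc a (e j)) ∧ f^[k] x = x := by
  obtain ⟨u, v, huv, hQ0, hQit, hQk⟩ := chain hcont hmaps ha hk he hloop k le_rfl
  rw [Nat.mod_self] at hQk
  have hQlohi : Set.Icc u v ⊆ Set.Icc lo hi :=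
    hQ0.trans (Set.uIcc_subset_Icc ha (he 0 hk).1)
  have hgcont : ContinuousOn f^[k] (Set.Icc u v) := (iter_cont hcont hmaps k).mono hQlohi
  have hFcont : ContinuousOn (fun z => f^[k] z - z) (Set.Icc u v) :=
    hgcont.sub continuousOn_id
  have hufix : f^[k] a = a := Function.iterate_fixed hfa k
  obtain ⟨w₁, hw₁Q, hw₁⟩ : ∃ w₁ ∈ Set.Icc u v, f^[k] w₁ = a ⊓ e 0 := by
    have : a ⊓ e 0 ∈ f^[k] '' Set.Icc u v := by
      rw [hQk, Set.uIcc]; exact Set.left_mem_Icc.mpr inf_le_sup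
    obtain ⟨w, hw, hw'⟩ := this
    exact ⟨w, hw, hw'⟩
  obtain ⟨w₂, hw₂Q, hw₂⟩ : ∃ w₂ ∈ Set.Icc u v, f^[k] w₂ = a ⊔ e 0 := by
    have : a ⊔ e 0 ∈ f^[k] '' Set.Icc u v := by
      rw [hQk, Set.uIcc]; exact Set.right_mem_Icc.mpr inf_le_sup
    obtain ⟨w, hw, hw'⟩ := this
    exact ⟨w, hw, hw'⟩
  by_cases hex : ∃ z ∈ Set.Icc u v, f^[k] z = z ∧ z ≠ a
  · obtain ⟨z, hzQ, hzfix, hzne⟩ := hex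
    exact ⟨z, hQ0 hzQ, hzne, fun j hj => hQit j hj (Set.mem_image_of_mem _ hzQ), hzfix⟩
  exfalso
  push_neg at hex
  have hex' : ∀ z ∈ Set.Icc u v, f^[k] z = z → z = a := hex
  -- a fixed point of f^[k] exists in Icc u v, hence a ∈ Icc u v
  have hw₁I : w₁ ∈ Set.uIcc a (e 0) := hQ0 hw₁Q
  have hw₂I : w₂ ∈ Set.uIcc a (e 0) := hQ0 hw₂Q
  have haQ : a ∈ Set.Icc u v := by
    have h1 : f^[k] w₁ - w₁ ≤ 0 := by
      rw [hw₁]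
      rw [Set.uIcc] at hw₁I
      linarith [hw₁I.1]
    have h2 : (0:ℝ) ≤ f^[k] w₂ - w₂ := by
      rw [hw₂]
      rw [Set.uIcc] at hw₂I
      linarith [hw₂I.2]
    have hsubu : Set.uIcc w₁ w₂ ⊆ Set.Icc u v :=
      Set.ordConnected_Icc.uIcc_subset hw₁Q hw₂Q
    have h0 : (0:ℝ) ∈ Set.uIcc (f^[k] w₁ - w₁) (f^[k] w₂ - w₂) := by
      rw [Set.uIcc_of_le (by linarith)]
      exact ⟨h1, h2⟩
    obtain ⟨z, hz, hz0⟩ := intermediate_value_uIcc (hFcont.mono hsubu) h0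
    have : z = a := hex' z (hsubu hz) (by dsimp at hz0; linarith)
    exact this ▸ hsubu hz
  have hene : ∀ j < k, e j ≠ a := fun j hj => (he j hj).2
  rcases (he 0 hk).2.lt_or_gt with hlt | hgt
  · -- e 0 < a : left-side case
    have hI0 : Set.uIcc a (e 0) = Set.Icc (e 0) a := Set.uIcc_of_ge (le_of_lt hlt)
    have hQ0' : Set.Icc u v ⊆ Set.Icc (e 0) a := hI0 ▸ hQ0
    have hva : v = a := le_antisymm ((hQ0' (Set.right_mem_Icc.mpr huv)).2) haQ.2
    have hinf : a ⊓ e 0 = e 0 := inf_eq_right.mpr (le_of_lt hlt)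
    rw [hinf] at hw₁
    have hw₁ne : w₁ ≠ a := by
      intro h; rw [h, hufix] at hw₁; exact (hene 0 hk) hw₁.symm
    have hw₁a : w₁ < a := lt_of_le_of_ne ((hQ0' hw₁Q).2) hw₁ne
    have hFw₁ : f^[k] w₁ - w₁ < 0 := by
      rw [hw₁]
      have h1 : e 0 ≤ w₁ := (hQ0' hw₁Q).1
      rcases eq_or_lt_of_le h1 with heq | hlt'
      · exfalso
        have : f^[k] w₁ = w₁ := by rw [hw₁, heq]
        exact hw₁ne (hex' w₁ hw₁Q this)
      · linarith
    have hua : u < a := lt_of_le_of_lt hw₁Q.1 hw₁a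
    have H1 : ∀ y ∈ Set.Ico u a, f^[k] y < y := by
      intro y hy
      by_contra hcon
      push_neg at hcon
      have hyQ : y ∈ Set.Icc u v := ⟨hy.1, by rw [hva]; exact le_of_lt hy.2⟩
      rcases eq_or_lt_of_le hcon with heq | hlt'
      · exact (ne_of_lt hy.2) (hex' y hyQ heq.symm)
      · have hFy : (0:ℝ) < f^[k] y - y := by linarith
        have hsubu : Set.uIcc w₁ y ⊆ Set.Icc u v :=
          Set.ordConnected_Icc.uIcc_subset hw₁Q hyQ
        have h0 : (0:ℝ) ∈ Set.uIcc (f^[k] w₁ - w₁) (f^[k] y - y) := by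
          rw [Set.uIcc_of_le (by linarith)]
          exact ⟨le_of_lt hFw₁, le_of_lt hFy⟩
        obtain ⟨z, hz, hz0⟩ := intermediate_value_uIcc (hFcont.mono hsubu) h0
        have hza : z = a := hex' z (hsubu hz) (by dsimp at hz0; linarith)
        rw [Set.uIcc] at hz
        have : z ≤ w₁ ⊔ y := hz.2
        have : z < a := lt_of_le_of_lt this (sup_lt_iff.mpr ⟨hw₁a, hy.2⟩)
        rw [hza] at this
        exact lt_irrefl a this
    have H2 : ∀ y ∈ Set.Icc u a, ∀ j < k, f^[j] y ∈ Set.uIcc a (e j) := by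
      intro y hy j hj
      exact hQit j hj ⟨y, ⟨hy.1, by rw [hva]; exact hy.2⟩, rfl⟩
    exact lemmaL hcont hmaps hpm ha hfa hauniq hk hene hnot hua (hQlohi (Set.left_mem_Icc.mpr huv)).1 H1 H2
  · -- a < e 0 : right-side case
    have hI0 : Set.uIcc a (e 0) = Set.Icc a (e 0) := Set.uIcc_of_le (le_of_lt hgt)
    have hQ0' : Set.Icc u v ⊆ Set.Icc a (e 0) := hI0 ▸ hQ0
    have hua : u = a := le_antisymm haQ.1 ((hQ0' (Set.left_mem_Icc.mpr huv)).1)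
    have hsup : a ⊔ e 0 = e 0 := sup_eq_right.mpr (le_of_lt hgt)
    rw [hsup] at hw₂
    have hw₂ne : w₂ ≠ a := by
      intro h; rw [h, hufix] at hw₂; exact (hene 0 hk) hw₂.symm
    have hw₂a : a < w₂ := lt_of_le_of_ne ((hQ0' hw₂Q).1) (Ne.symm hw₂ne)
    have hFw₂ : (0:ℝ) < f^[k] w₂ - w₂ := by
      rw [hw₂]
      have h1 : w₂ ≤ e 0 := (hQ0' hw₂Q).2
      rcases eq_or_lt_of_le h1 with heq | hlt'
      · exfalso
        have : f^[k] w₂ = w₂ := by rw [hw₂, heq]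
        exact hw₂ne (hex' w₂ hw₂Q this)
      · linarith
    have hva : a < v := lt_of_lt_of_le hw₂a hw₂Q.2
    have H1 : ∀ y ∈ Set.Ioc a v, y < f^[k] y := by
      intro y hy
      by_contra hcon
      push_neg at hcon
      have hyQ : y ∈ Set.Icc u v := ⟨by rw [hua]; exact le_of_lt hy.1, hy.2⟩
      rcases eq_or_lt_of_le hcon with heq | hlt'
      · exact (ne_of_gt hy.1) (hex' y hyQ heq)
      · have hFy : f^[k] y - y < 0 := by linarith
        have hsubu : Set.uIcc y w₂ ⊆ Set.Icc u v :=
          Set.ordConnected_Icc.uIcc_subset hyQ hw₂Q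
        have h0 : (0:ℝ) ∈ Set.uIcc (f^[k] y - y) (f^[k] w₂ - w₂) := by
          rw [Set.uIcc_of_le (by linarith)]
          exact ⟨le_of_lt hFy, le_of_lt hFw₂⟩
        obtain ⟨z, hz, hz0⟩ := intermediate_value_uIcc (hFcont.mono hsubu) h0
        have hza : z = a := hex' z (hsubu hz) (by dsimp at hz0; linarith)
        rw [Set.uIcc] at hz
        have : y ⊓ w₂ ≤ z := hz.1
        have : a < z := lt_of_lt_of_le (lt_inf_iff.mpr ⟨hy.1, hw₂a⟩) this
        rw [hza] at this
        exact lt_irrefl a this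
    have H2 : ∀ y ∈ Set.Icc a v, ∀ j < k, f^[j] y ∈ Set.uIcc a (e j) := by
      intro y hy j hj
      exact hQit j hj ⟨y, ⟨by rw [hua]; exact hy.1, hy.2⟩, rfl⟩
    exact lemmaR hcont hmaps hpm ha hfa hauniq hk hene hnot hva (hQlohi (Set.right_mem_Icc.mpr huv)).2 H1 H2


lemma count_add (P : ℕ → Prop) [DecidablePred P] (n q : ℕ) :
    ((Finset.range (n+q)).filter P).card =
      ((Finset.range n).filter P).card + ((Finset.range q).filter (fun i => P (n+i))).card := by
  induction q with
  | zero => simp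
  | succ q ih =>
    rw [show n + (q+1) = (n+q) + 1 by ring, Finset.range_add_one, Finset.range_add_one,
      Finset.filter_insert, Finset.filter_insert]
    by_cases h : P (n + q)
    · rw [if_pos h, if_pos h, Finset.card_insert_of_notMem (by simp),
        Finset.card_insert_of_notMem (by simp), ih]
      ring
    · rw [if_neg h, if_neg h, ih]

lemma count_mul (s : ℕ → Prop) [DecidablePred fun i => ¬(s i ↔ s (i+1))] (q : ℕ) (hq : ∀ i, s (i+q) ↔ s i) (m : ℕ) :
    ((Finset.range (m*q)).filter (fun i => ¬(s i ↔ s (i+1)))).card =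
      m * ((Finset.range q).filter (fun i => ¬(s i ↔ s (i+1)))).card := by
  have hper : ∀ (c : ℕ) (i : ℕ), s (i + c*q) ↔ s i := by
    intro c
    induction c with
    | zero => simp
    | succ c ih =>
      intro i
      rw [show i + (c+1)*q = (i + c*q) + q by ring, hq, ih]
  induction m with
  | zero => simp
  | succ m ih =>
    rw [show (m+1)*q = m*q + q by ring, count_add (fun i => ¬(s i ↔ s (i+1))) (m*q) q, ih]
    have : (Finset.range q).filter (fun i => ¬(s (m*q+i) ↔ s (m*q+i+1))) =
        (Finset.range q).filter (fun i => ¬(s i ↔ s (i+1))) := by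
      apply Finset.filter_congr
      intro i _
      have h1 : s (m*q+i) ↔ s i := by rw [show m*q+i = i + m*q by ring]; exact hper m i
      have h2 : s (m*q+i+1) ↔ s (i+1) := by
        rw [show m*q+i+1 = (i+1) + m*q by ring]; exact hper m (i+1)
      constructor
      · intro h hc; exact h (by rw [h1, h2]; exact hc)
      · intro h hc; exact h (by rw [← h1, ← h2]; exact hc)
    rw [this]
    ring



/-- Given a continuous piecewise-monotone interval map `f` with unique fixed point `a` and
an admissible loop `ᾱ = (I₀, …, I_{k-1})` of non-degenerate intervals, `I_j = [a, e j]`,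
with over-rotation pair `(p/2, k)`, and assuming it is not the case that `k` is even and
consecutive intervals always lie on opposite sides of `a`, there is a periodic point
`x ∈ I₀`, `x ≠ a`, following the loop, with `f^[k] x = x`, whose over-rotation number is
`p/(2k)`; if moreover the sequence `(φ_a(I₀), …, φ_a(I_{k-1}))` is non-repetitive then the
over-rotation pair of the orbit of `x` is `(p/2, k)`. -/
theorem admissible_loop_generates (f : ℝ → ℝ) (lo hi a : ℝ) (hle : lo ≤ hi)
    (hcont : ContinuousOn f (Set.Icc lo hi))
    (hmaps : Set.MapsTo f (Set.Icc lo hi) (Set.Icc lo hi))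
    (hpm : PiecewiseMonotoneOn f lo hi)
    (ha : a ∈ Set.Icc lo hi) (hfa : f a = a)
    (hauniq : ∀ b ∈ Set.Icc lo hi, f b = b → b = a)
    (k : ℕ) (hk : 0 < k) (e : ℕ → ℝ)
    (he : ∀ j < k, e j ∈ Set.Icc lo hi ∧ e j ≠ a)
    (hloop : ∀ j < k, Set.uIcc a (e ((j + 1) % k)) ⊆ f '' Set.uIcc a (e j))
    (p : ℕ)
    (hp : Set.ncard {j : ℕ | j < k ∧
        ((e j < a ∧ a < e ((j + 1) % k)) ∨ (e ((j + 1) % k) < a ∧ a < e j))} = p)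
    (hnot : ¬ (Even k ∧ ∀ j < k,
        ((e j < a ∧ a < e ((j + 1) % k)) ∨ (e ((j + 1) % k) < a ∧ a < e j)))) :
    ∃ x ∈ Set.uIcc a (e 0), x ≠ a ∧
      (∀ j < k, f^[j] x ∈ Set.uIcc a (e j)) ∧ f^[k] x = x ∧
      (switchCount f x (Function.minimalPeriod f x) : ℝ) /
          (2 * (Function.minimalPeriod f x : ℝ)) = (p : ℝ) / (2 * (k : ℝ)) ∧
      ((∀ d, 0 < d → d < k → d ∣ k →
          ∃ j < k, ¬ ((a < e ((j + d) % k)) ↔ (a < e j))) →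
        Function.minimalPeriod f x = k ∧ switchCount f x k = p) := by
  obtain ⟨x, hxI0, hxa, hit, hfkx⟩ := exists_pt hcont hmaps hpm ha hfa hauniq hk he hloop hnot
  have hxper : Function.IsPeriodicPt f k x := hfkx
  set q := Function.minimalPeriod f x with hqdef
  have hq0 : 0 < q := hxper.minimalPeriod_pos hk
  have hqdvd : q ∣ k := hxper.minimalPeriod_dvd
  have hfqx : f^[q] x = x := Function.iterate_minimalPeriod
  have hxIcc : x ∈ Set.Icc lo hi := (Set.uIcc_subset_Icc ha (he 0 hk).1) hxI0
  have hxmem : ∀ j, f^[j] x ∈ Set.Icc lo hi := fun j => iter_maps hmaps j hxIcc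
  have hxne : ∀ j, f^[j] x ≠ a := by
    intro j hja
    have hall : ∀ m, f^[j+m] x = a := by
      intro m
      induction m with
      | zero => simpa using hja
      | succ m ih =>
        rw [show j+(m+1) = (j+m)+1 by ring, Function.iterate_succ_apply', ih, hfa]
    have hper2 : f^[k*(j+1)] x = x := hxper.mul_const (j+1)
    have hle2 : j ≤ k*(j+1) := by
      have : 1*(j+1) ≤ k*(j+1) := Nat.mul_le_mul_right _ hk
      omega
    have := hall (k*(j+1) - j)
    rw [show j + (k*(j+1)-j) = k*(j+1) by omega, hper2] at this
    exact hxa this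
  have hsignlt : ∀ i, a < f^[i] x → f^[i+1] x < f^[i] x := by
    intro i h
    rw [Function.iterate_succ_apply']
    exact fix_lt hcont hmaps ha hauniq (hxmem i) h
  have hsigngt : ∀ i, f^[i] x < a → f^[i] x < f^[i+1] x := by
    intro i h
    rw [Function.iterate_succ_apply']
    exact fix_gt hcont hmaps ha hauniq (hxmem i) h
  have hkey : ∀ i, ((f^[i+1] x - f^[i] x) * (f^[i+2] x - f^[i+1] x) < 0 ↔
      ¬((a < f^[i] x) ↔ (a < f^[i+1] x))) := by
    intro i
    have d1pos : 0 < f^[i+1] x - f^[i] x ↔ ¬ (a < f^[i] x) := by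
      constructor
      · intro h hlt
        have := hsignlt i hlt
        linarith
      · intro h
        have hlt : f^[i] x < a := lt_of_le_of_ne (not_lt.mp h) (hxne i)
        have := hsigngt i hlt
        linarith
    have d1neg : f^[i+1] x - f^[i] x < 0 ↔ (a < f^[i] x) := by
      constructor
      · intro h
        by_contra hc
        have hlt : f^[i] x < a := lt_of_le_of_ne (not_lt.mp hc) (hxne i)
        have := hsigngt i hlt
        linarith
      · intro h
        have := hsignlt i h
        linarith
    have d2pos : 0 < f^[i+2] x - f^[i+1] x ↔ ¬ (a < f^[i+1] x) := by
      constructor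
      · intro h hlt
        have := hsignlt (i+1) hlt
        linarith
      · intro h
        have hlt : f^[i+1] x < a := lt_of_le_of_ne (not_lt.mp h) (hxne (i+1))
        have := hsigngt (i+1) hlt
        linarith
    have d2neg : f^[i+2] x - f^[i+1] x < 0 ↔ (a < f^[i+1] x) := by
      constructor
      · intro h
        by_contra hc
        have hlt : f^[i+1] x < a := lt_of_le_of_ne (not_lt.mp hc) (hxne (i+1))
        have := hsigngt (i+1) hlt
        linarith
      · intro h
        have := hsignlt (i+1) h
        linarith
    rw [mul_neg_iff]
    constructor
    · rintro (⟨h1, h2⟩ | ⟨h1, h2⟩) hiff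
      · exact (d1pos.mp h1) (hiff.mpr (d2neg.mp h2))
      · exact (d2pos.mp h2) (hiff.mp (d1neg.mp h1))
    · intro h
      rcases Classical.em (a < f^[i] x) with h1 | h1
      · rcases Classical.em (a < f^[i+1] x) with h2 | h2
        · exact absurd (iff_of_true h1 h2) h
        · exact Or.inr ⟨d1neg.mpr h1, d2pos.mpr h2⟩
      · rcases Classical.em (a < f^[i+1] x) with h2 | h2
        · exact Or.inl ⟨d1pos.mpr h1, d2neg.mpr h2⟩
        · exact absurd (iff_of_false h1 h2) h
  have hSC : ∀ n, switchCount f x n =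
      ((Finset.range n).filter (fun i => ¬((a < f^[i] x) ↔ (a < f^[i+1] x)))).card := by
    intro n
    rw [switchCount]
    rw [show {i : ℕ | i < n ∧ (f^[i+1] x - f^[i] x) * (f^[i+2] x - f^[i+1] x) < 0} =
        ↑((Finset.range n).filter (fun i => ¬((a < f^[i] x) ↔ (a < f^[i+1] x)))) by
      ext i
      simp only [Finset.coe_filter, Finset.mem_range, Set.mem_setOf_eq]
      exact and_congr_right (fun _ => hkey i)]
    exact Set.ncard_coe_finset _
  have hperq : ∀ i, (a < f^[i+q] x) ↔ (a < f^[i] x) := by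
    intro i
    rw [Function.iterate_add_apply, hfqx]
  have hs_mod : ∀ i, (a < f^[i] x) ↔ (a < f^[i % k] x) := by
    intro i
    have heq : f^[i] x = f^[i % k] x := by
      conv_lhs => rw [← Nat.mod_add_div i k]
      rw [Function.iterate_add_apply]
      congr 1
      exact hxper.mul_const (i/k)
    rw [heq]
  have hside : ∀ j < k, ((a < f^[j] x) ↔ (a < e j)) := fun j hj =>
    side_det (hit j hj) (hxne j) ((he j hj).2)
  have hside' : ∀ i, (a < f^[i] x) ↔ (a < e (i % k)) := by
    intro i
    rw [hs_mod i]
    exact hside (i % k) (Nat.mod_lt _ hk)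
  have hp' : p = ((Finset.range k).filter
      (fun i => ¬((a < f^[i] x) ↔ (a < f^[i+1] x)))).card := by
    rw [← hp]
    rw [show {j : ℕ | j < k ∧
        ((e j < a ∧ a < e ((j + 1) % k)) ∨ (e ((j + 1) % k) < a ∧ a < e j))} =
        ↑((Finset.range k).filter (fun i => ¬((a < f^[i] x) ↔ (a < f^[i+1] x)))) by
      ext j
      simp only [Finset.coe_filter, Finset.mem_range, Set.mem_setOf_eq]
      apply and_congr_right
      intro hj
      have hA : (a < f^[j] x) ↔ (a < e j) := hside j hj
      have hB : (a < f^[j+1] x) ↔ (a < e ((j+1) % k)) := hside' (j+1)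
      have hAne : e j ≠ a := (he j hj).2
      have hBne : e ((j+1) % k) ≠ a := (he _ (Nat.mod_lt _ hk)).2
      constructor
      · rintro (⟨h1, h2⟩ | ⟨h1, h2⟩) hiff
        · have := hiff.mpr (hB.mpr h2)
          rw [hA] at this
          linarith
        · have := hiff.mp (hA.mpr h2)
          rw [hB] at this
          linarith
      · intro h
        rcases Classical.em (a < e j) with h1 | h1
        · rcases Classical.em (a < e ((j+1) % k)) with h2 | h2
          · exact absurd (by rw [hA, hB]; exact iff_of_true h1 h2) h
          · exact Or.inr ⟨lt_of_le_of_ne (not_lt.mp h2) hBne, h1⟩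
        · rcases Classical.em (a < e ((j+1) % k)) with h2 | h2
          · exact Or.inl ⟨lt_of_le_of_ne (not_lt.mp h1) hAne, h2⟩
          · exact absurd (by rw [hA, hB]; exact iff_of_false h1 h2) h]
    exact Set.ncard_coe_finset _
  obtain ⟨m, hm⟩ := hqdvd
  have hm0 : 0 < m := by
    rcases Nat.eq_zero_or_pos m with rfl | h
    · omega
    · exact h
  have hNk : ((Finset.range k).filter
      (fun i => ¬((a < f^[i] x) ↔ (a < f^[i+1] x)))).card =
      m * ((Finset.range q).filter
      (fun i => ¬((a < f^[i] x) ↔ (a < f^[i+1] x)))).card := by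
    rw [hm, show q*m = m*q by ring]
    exact count_mul (fun i => a < f^[i] x) q hperq m
  refine ⟨x, hxI0, hxa, hit, hfkx, ?_, ?_⟩
  · -- rotation number equality
    rw [hSC q]
    have hpr : (p:ℝ) = (m:ℝ) * ((Finset.range q).filter
        (fun i => ¬((a < f^[i] x) ↔ (a < f^[i+1] x)))).card := by
      rw [hp', hNk]
      push_cast
      ring
    have hkr : (k:ℝ) = (q:ℝ) * (m:ℝ) := by
      rw [hm]; push_cast; ring
    rw [hpr, hkr]
    have hqne : (q:ℝ) ≠ 0 := Nat.cast_ne_zero.mpr (Nat.pos_iff_ne_zero.mp hq0)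
    have hmne : (m:ℝ) ≠ 0 := Nat.cast_ne_zero.mpr (Nat.pos_iff_ne_zero.mp hm0)
    rw [div_eq_div_iff (mul_ne_zero two_ne_zero hqne) (mul_ne_zero two_ne_zero (mul_ne_zero hqne hmne))]
    ring
  · -- minimal period and switch count under non-repetitiveness
    intro H
    have hqk : q = k := by
      by_contra hne
      have hqlt : q < k := lt_of_le_of_ne (Nat.le_of_dvd hk ⟨m, hm⟩) hne
      obtain ⟨j, hj, hcon⟩ := H q hq0 hqlt ⟨m, hm⟩
      apply hcon
      calc (a < e ((j + q) % k)) ↔ (a < f^[j+q] x) := (hside' (j+q)).symm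
        _ ↔ (a < f^[j] x) := hperq j
        _ ↔ (a < e j) := hside j hj
    refine ⟨hqk, ?_⟩
    rw [hSC k, ← hp']



end OverRotation
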